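/- Fix an integer q ≥ 2 and an alphabet Σ_q of size q. Let n, ℓ, p, k be integers with p ≥ 2, ℓ ≥ 4p−7, k ≥ 1, k dividing n, ℓ ≤ n/k, and ℓ ≥ ⌈log_q(n/k − ℓ + 2)⌉ + p + 1. Then a_q(n + 3k − 2, ℓ, p) ≥ q^n; equivalently, there exists an injective map from Σ_q^n into A_q(n + 3k − 2, ℓ, p), i.e., an ℓ-window p-least-period avoiding code with 3k−2 redundancy symbols. -/

import Mathlib

/-- `p` is a period of the vector `s = (s_1, …, s_n)` (0-indexed here):
`s_i = s_{i+p}` for all valid indices. -/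
def IsPeriod {α : Type*} {n : ℕ} (s : Fin n → α) (p : ℕ) : Prop :=
  ∀ i : ℕ, ∀ h : i + p < n,
    s ⟨i, lt_of_le_of_lt (Nat.le_add_right i p) h⟩ = s ⟨i + p, h⟩

/-- The window of length `ℓ` of `s` starting at (0-indexed) position `i`. -/
def window {α : Type*} {n : ℕ} (s : Fin n → α) (i ℓ : ℕ) (h : i + ℓ ≤ n) :
    Fin ℓ → α :=
  fun j => s ⟨i + j, Nat.lt_of_lt_of_le (Nat.add_lt_add_left j.isLt i) h⟩

/-- `s` is an `ℓ`-window `p`-least-period avoiding vector: no window of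
length `ℓ` has any period `p'` with `1 ≤ p' < p`. -/
def LPAvoiding {α : Type*} {n : ℕ} (ℓ p : ℕ) (s : Fin n → α) : Prop :=
  ∀ i : ℕ, ∀ h : i + ℓ ≤ n, ∀ p', 1 ≤ p' → p' < p →
    ¬ IsPeriod (window s i ℓ h) p'

/-- `s` is an `ℓ`-window `p`-period avoiding vector: no window of
length `ℓ` has period `p`. -/
def PAvoiding {α : Type*} {n : ℕ} (ℓ p : ℕ) (s : Fin n → α) : Prop :=
  ∀ i : ℕ, ∀ h : i + ℓ ≤ n, ¬ IsPeriod (window s i ℓ h) p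

/-- `s` satisfies the `k`-RLL constraint w.r.t. the zero symbol `z`:
no window of length `k` consists entirely of `z`. -/
def RLLok {α : Type*} {n : ℕ} (z : α) (k : ℕ) (s : Fin n → α) : Prop :=
  ∀ i : ℕ, ∀ h : i + k ≤ n, ∃ j : Fin k, window s i k h j ≠ z



theorem fw_aux {α : Type*} (N : ℕ) : ∀ (a b n : ℕ) (f : ℕ → α), a + b ≤ N →
    1 ≤ a → 1 ≤ b → a ≤ n → b ≤ n → a + b - Nat.gcd a b ≤ n →
    (∀ i, i + a < n → f i = f (i + a)) →
    (∀ i, i + b < n → f i = f (i + b)) →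
    f (n - a) = f (n - b) := by
  induction N with
  | zero => intro a b n f hN ha hb; omega
  | succ N ih =>
    have key : ∀ (a b n : ℕ) (f : ℕ → α), a + b ≤ N + 1 →
        1 ≤ a → 1 ≤ b → a < b → a ≤ n → b ≤ n → a + b - Nat.gcd a b ≤ n →
        (∀ i, i + a < n → f i = f (i + a)) →
        (∀ i, i + b < n → f i = f (i + b)) →
        f (n - a) = f (n - b) := by
      intro a b n f hN ha hb hab han hbn hgcd hfa hfb
      have hgdvd : Nat.gcd a b ∣ b - a :=
        Nat.dvd_sub (Nat.gcd_dvd_right a b) (Nat.gcd_dvd_left a b)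
      have hgle : Nat.gcd a b ≤ b - a := Nat.le_of_dvd (by omega) hgdvd
      have hgcd2 : Nat.gcd a (b - a) = Nat.gcd a b := by
        conv_rhs => rw [← Nat.sub_add_cancel (le_of_lt hab)]
        rw [Nat.gcd_add_self_right]
      have h2a : 2 * a ≤ n := by omega
      have step : f ((n - a) - a + a) = f ((n - a) - (b - a) + a) := by
        exact ih a (b - a) (n - a) (fun j => f (j + a)) (by omega) ha (by omega)
          (by omega) (by omega) (by rw [hgcd2]; omega)
          (fun i hi => by
            show f (i + a) = f (i + a + a)
            exact hfa (i + a) (by omega))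
          (fun i hi => by
            show f (i + a) = f (i + (b - a) + a)
            have e1 := hfa i (by omega)
            have e2 := hfb i (by omega)
            have e3 : i + (b - a) + a = i + b := by omega
            rw [e3, ← e1, e2])
      have e4 : (n - a) - a + a = n - a := by omega
      have e5 : (n - a) - (b - a) + a = n - (b - a) := by omega
      rw [e4, e5] at step
      have u3 := hfa (n - b) (by omega)
      have e6 : n - b + a = n - (b - a) := by omega
      rw [e6] at u3
      rw [step, ← u3]
    intro a b n f hN ha hb han hbn hgcd hfa hfb
    rcases lt_trichotomy a b with hab | hab | hab
    · exact key a b n f hN ha hb hab han hbn hgcd hfa hfb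
    · subst hab; rfl
    · exact (key b a n f (by omega) hb ha hab hbn han (by rw [Nat.gcd_comm]; omega)
        hfb hfa).symm

/-- Fine–Wilf: two periods `a,b` on window `[0,n)` with `n ≥ a+b-gcd` force
`f (n-a) = f (n-b)`. -/
theorem fw {α : Type*} (a b n : ℕ) (f : ℕ → α)
    (ha : 1 ≤ a) (hb : 1 ≤ b) (han : a ≤ n) (hbn : b ≤ n)
    (hgcd : a + b - Nat.gcd a b ≤ n)
    (hfa : ∀ i, i + a < n → f i = f (i + a))
    (hfb : ∀ i, i + b < n → f i = f (i + b)) :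
    f (n - a) = f (n - b) :=
  fw_aux (a + b) a b n f le_rfl ha hb han hbn hgcd hfa hfb



section Junction

variable {Sigma : Type*} [Fintype Sigma] (p ℓ σ : ℕ)

/-- The junction word: `S` on `[0, ℓ-1)`, `u` at `ℓ-1`, `v` at `ℓ`, then `T`. -/
def Jfun (S T : ℕ → Sigma) (u v : Sigma) : ℕ → Sigma :=
  fun t => if t < ℓ - 1 then S t else if t = ℓ - 1 then u else if t = ℓ then v
    else T (t - (ℓ + 1))

variable {p ℓ σ}

lemma left_force (hσℓ : σ + 1 ≤ ℓ)
    (hple : ∀ p', 1 ≤ p' → p' < p → p' ≤ σ)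
    (hsum : ∀ p1 p2, 1 ≤ p1 → p1 < p → 1 ≤ p2 → p2 < p → p1 ≠ p2 →
      p1 + p2 - Nat.gcd p1 p2 ≤ σ)
    (S : ℕ → Sigma) (p1 p2 : ℕ) (h1a : 1 ≤ p1) (h1b : p1 < p)
    (h2a : 1 ≤ p2) (h2b : p2 < p)
    (hper1 : ∀ t, t + p1 < σ → S (ℓ - 1 - σ + t) = S (ℓ - 1 - σ + t + p1))
    (hper2 : ∀ t, t + p2 < σ → S (ℓ - 1 - σ + t) = S (ℓ - 1 - σ + t + p2)) :
    S (ℓ - 1 - p1) = S (ℓ - 1 - p2) := by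
  rcases eq_or_ne p1 p2 with h | h
  · rw [h]
  · have h1σ := hple p1 h1a h1b
    have h2σ := hple p2 h2a h2b
    have key := fw p1 p2 σ (fun t => S (ℓ - 1 - σ + t)) h1a h2a h1σ h2σ
      (hsum p1 p2 h1a h1b h2a h2b h)
      (fun i hi => by
        show S (ℓ - 1 - σ + i) = S (ℓ - 1 - σ + (i + p1))
        rw [show ℓ - 1 - σ + (i + p1) = ℓ - 1 - σ + i + p1 from by omega]
        exact hper1 i hi)
      (fun i hi => by
        show S (ℓ - 1 - σ + i) = S (ℓ - 1 - σ + (i + p2))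
        rw [show ℓ - 1 - σ + (i + p2) = ℓ - 1 - σ + i + p2 from by omega]
        exact hper2 i hi)
    rwa [show ℓ - 1 - σ + (σ - p1) = ℓ - 1 - p1 from by omega,
      show ℓ - 1 - σ + (σ - p2) = ℓ - 1 - p2 from by omega] at key

lemma right_force
    (hple : ∀ p', 1 ≤ p' → p' < p → p' ≤ σ)
    (hsum : ∀ p1 p2, 1 ≤ p1 → p1 < p → 1 ≤ p2 → p2 < p → p1 ≠ p2 →
      p1 + p2 - Nat.gcd p1 p2 ≤ σ)
    (T : ℕ → Sigma) (p1 p2 : ℕ) (h1a : 1 ≤ p1) (h1b : p1 < p)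
    (h2a : 1 ≤ p2) (h2b : p2 < p)
    (hper1 : ∀ t, t + p1 < σ → T t = T (t + p1))
    (hper2 : ∀ t, t + p2 < σ → T t = T (t + p2)) :
    T (p1 - 1) = T (p2 - 1) := by
  rcases eq_or_ne p1 p2 with h | h
  · rw [h]
  · have h1σ := hple p1 h1a h1b
    have h2σ := hple p2 h2a h2b
    have key := fw p1 p2 σ (fun t => T (σ - 1 - t)) h1a h2a h1σ h2σ
      (hsum p1 p2 h1a h1b h2a h2b h)
      (fun i hi => by
        show T (σ - 1 - i) = T (σ - 1 - (i + p1))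
        have := hper1 (σ - 1 - (i + p1)) (by omega)
        rw [show σ - 1 - (i + p1) + p1 = σ - 1 - i from by omega] at this
        exact this.symm)
      (fun i hi => by
        show T (σ - 1 - i) = T (σ - 1 - (i + p2))
        have := hper2 (σ - 1 - (i + p2)) (by omega)
        rw [show σ - 1 - (i + p2) + p2 = σ - 1 - i from by omega] at this
        exact this.symm)
    rwa [show σ - 1 - (σ - p1) = p1 - 1 from by omega,
      show σ - 1 - (σ - p2) = p2 - 1 from by omega] at key

lemma junction (hq2 : 2 ≤ Fintype.card Sigma)
    (hσ1 : 1 ≤ σ) (hℓσ : 2 * σ + 1 ≤ ℓ)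
    (hple : ∀ p', 1 ≤ p' → p' < p → p' ≤ σ)
    (hsum : ∀ p1 p2, 1 ≤ p1 → p1 < p → 1 ≤ p2 → p2 < p → p1 ≠ p2 →
      p1 + p2 - Nat.gcd p1 p2 ≤ σ)
    (S T : ℕ → Sigma) :
    ∃ u v : Sigma, ∀ i p', i ≤ ℓ → 1 ≤ p' → p' < p →
      ∃ jj, jj + p' < ℓ ∧
        Jfun ℓ S T u v (i + jj) ≠ Jfun ℓ S T u v (i + jj + p') := by
  haveI : Nonempty Sigma := Fintype.card_pos_iff.mp (by omega)
  have hU : ∃ u : Sigma, ∀ p', 1 ≤ p' → p' < p →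
      (∀ t, t + p' < σ → S (ℓ - 1 - σ + t) = S (ℓ - 1 - σ + t + p')) →
      u ≠ S (ℓ - 1 - p') := by
    by_cases hLF : ∃ p'', 1 ≤ p'' ∧ p'' < p ∧
        ∀ t, t + p'' < σ → S (ℓ - 1 - σ + t) = S (ℓ - 1 - σ + t + p'')
    · obtain ⟨pl, hpl1, hpl2, hplper⟩ := hLF
      obtain ⟨u, hu⟩ := Fintype.exists_ne_of_one_lt_card (by omega) (S (ℓ - 1 - pl))
      refine ⟨u, fun p' h1 h2 hper => ?_⟩
      rw [left_force (by omega) hple hsum S p' pl h1 h2 hpl1 hpl2 hper hplper]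
      exact hu
    · exact ⟨Classical.arbitrary Sigma,
        fun p' h1 h2 hper => absurd ⟨p', h1, h2, hper⟩ hLF⟩
  have hV : ∃ v : Sigma, ∀ p', 1 ≤ p' → p' < p →
      (∀ t, t + p' < σ → T t = T (t + p')) → v ≠ T (p' - 1) := by
    by_cases hRF : ∃ p'', 1 ≤ p'' ∧ p'' < p ∧ ∀ t, t + p'' < σ → T t = T (t + p'')
    · obtain ⟨pr, hpr1, hpr2, hprper⟩ := hRF
      obtain ⟨v, hv⟩ := Fintype.exists_ne_of_one_lt_card (by omega) (T (pr - 1))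
      refine ⟨v, fun p' h1 h2 hper => ?_⟩
      rw [right_force hple hsum T p' pr h1 h2 hpr1 hpr2 hper hprper]
      exact hv
    · exact ⟨Classical.arbitrary Sigma,
        fun p' h1 h2 hper => absurd ⟨p', h1, h2, hper⟩ hRF⟩
  obtain ⟨u, hu⟩ := hU
  obtain ⟨v, hv⟩ := hV
  refine ⟨u, v, fun i p' hi h1 h2 => ?_⟩
  by_contra hcon
  push_neg at hcon
  have hp'σ := hple p' h1 h2
  have Jval1 : ∀ t, t < ℓ - 1 → Jfun ℓ S T u v t = S t := by
    intro t ht; simp only [Jfun, if_pos ht]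
  have Jval2 : Jfun ℓ S T u v (ℓ - 1) = u := by
    simp only [Jfun]; rw [if_neg (by omega)]; simp
  have Jval3 : Jfun ℓ S T u v ℓ = v := by
    simp only [Jfun]; rw [if_neg (by omega), if_neg (by omega)]; simp
  have Jval4 : ∀ t, ℓ < t → Jfun ℓ S T u v t = T (t - (ℓ + 1)) := by
    intro t ht; simp only [Jfun]
    rw [if_neg (by omega), if_neg (by omega), if_neg (by omega)]
  rcases le_or_gt (i + σ) (ℓ - 1) with hA | hB
  · -- left case: window sees the σ-suffix of S
    have hSper : ∀ t, t + p' < σ → S (ℓ - 1 - σ + t) = S (ℓ - 1 - σ + t + p') := by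
      intro t ht
      have h3 := hcon (ℓ - 1 - σ + t - i) (by omega)
      rw [show i + (ℓ - 1 - σ + t - i) = ℓ - 1 - σ + t from by omega] at h3
      rw [Jval1 _ (by omega), Jval1 _ (by omega)] at h3
      exact h3
    have hune := hu p' h1 h2 hSper
    have h4 := hcon (ℓ - 1 - i - p') (by omega)
    rw [show i + (ℓ - 1 - i - p') = ℓ - 1 - p' from by omega,
      show ℓ - 1 - p' + p' = ℓ - 1 from by omega] at h4
    rw [Jval1 _ (by omega), Jval2] at h4
    exact hune h4.symm
  · -- right case: window sees the σ-prefix of T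
    have hTper : ∀ t, t + p' < σ → T t = T (t + p') := by
      intro t ht
      have h3 := hcon (ℓ + 1 + t - i) (by omega)
      rw [show i + (ℓ + 1 + t - i) = ℓ + 1 + t from by omega] at h3
      rw [Jval4 _ (by omega), Jval4 _ (by omega)] at h3
      rw [show ℓ + 1 + t - (ℓ + 1) = t from by omega,
        show ℓ + 1 + t + p' - (ℓ + 1) = t + p' from by omega] at h3
      exact h3
    have hvne := hv p' h1 h2 hTper
    have h4 := hcon (ℓ - i) (by omega)
    rw [show i + (ℓ - i) = ℓ from by omega] at h4
    rw [Jval3, Jval4 _ (by omega),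
      show ℓ + p' - (ℓ + 1) = p' - 1 from by omega] at h4
    exact hvne h4
end Junction


section Count
variable {Sigma : Type*} [Fintype Sigma] [Nonempty Sigma] (ℓ p : ℕ)

/-- total accessor -/
noncomputable def getS (L : ℕ) (x : Fin L → Sigma) (a : ℕ) : Sigma :=
  if h : a < L then x ⟨a, h⟩ else Classical.arbitrary Sigma

/-- the window starting at `i` is `p'`-periodic -/
def PerAt (L : ℕ) (x : Fin L → Sigma) (i p' : ℕ) : Prop :=
  ∀ a, i ≤ a → a + p' < i + ℓ → getS L x a = getS L x (a + p')

/-- every length-`ℓ` window avoids all periods `< p` -/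
def GoodP (L : ℕ) (x : Fin L → Sigma) : Prop :=
  ∀ i p', i + ℓ ≤ L → 1 ≤ p' → p' < p → ¬ PerAt ℓ L x i p'

variable {ℓ p}

lemma geo_sum (q : ℕ) (hq : 1 ≤ q) : ∀ m, 1 ≤ m →
    (q - 1) * (∑ x ∈ Finset.Ioo 0 m, q ^ x) + q = q ^ m := by
  have main : ∀ m, 1 ≤ m → (q - 1) * (∑ x ∈ Finset.Ico 1 m, q ^ x) + q = q ^ m := by
    intro m
    induction m with
    | zero => omega
    | succ m ih =>
      intro _
      rcases Nat.eq_zero_or_pos m with hm | hm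
      · subst hm; simp
      · rw [Finset.sum_Ico_succ_top (by omega)]
        have := ih hm
        rw [Nat.mul_add, pow_succ]
        calc (q-1) * (∑ x ∈ Finset.Ico 1 m, q ^ x) + (q-1) * q ^ m + q
            = ((q-1) * (∑ x ∈ Finset.Ico 1 m, q ^ x) + q) + (q-1) * q ^ m := by ring
          _ = q ^ m + (q - 1) * q ^ m := by rw [this]
          _ = q ^ m * q := by
              have hq1 : 1 + (q - 1) = q := by omega
              calc q ^ m + (q-1) * q^m = (1 + (q-1)) * q ^ m := by ring
                _ = q * q ^ m := by rw [hq1]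
                _ = q ^ m * q := by ring
  intro m hm
  rw [← Finset.Ico_add_one_left_eq_Ioo]
  exact main m hm

lemma block_count (q b : ℕ) (hq2 : 2 ≤ q) (hcard : Fintype.card Sigma = q)
    (hp2 : 2 ≤ p) (hl : p + 2 ≤ ℓ) (hbl : ℓ ≤ b)
    (hA : b + 2 - ℓ ≤ q ^ (ℓ - p - 1)) :
    q ^ b ≤ Nat.card {x : Fin (b+1) → Sigma // GoodP ℓ p (b+1) x} := by
  classical
  set L := b + 1 with hL
  set Bad : ℕ → ℕ → Finset (Fin L → Sigma) :=
    fun i p' => Finset.univ.filter (fun x => PerAt ℓ L x i p') with hBad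
  have cover : (Finset.univ : Finset (Fin L → Sigma)) ⊆
      ((Finset.univ : Finset (Fin L → Sigma)).filter (fun x => GoodP ℓ p L x)) ∪
      ((Finset.range (L - ℓ + 1) ×ˢ Finset.Ioo 0 p).biUnion
        (fun ip => Bad ip.1 ip.2)) := by
    intro x _
    by_cases hx : GoodP ℓ p L x
    · exact Finset.mem_union_left _ (Finset.mem_filter.mpr ⟨Finset.mem_univ _, hx⟩)
    · simp only [GoodP] at hx; push_neg at hx
      obtain ⟨i, p', hiL, h1, h2, hper⟩ := hx
      refine Finset.mem_union_right _ (Finset.mem_biUnion.mpr ⟨(i, p'), ?_, ?_⟩)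
      · rw [Finset.mem_product]
        constructor
        · rw [Finset.mem_range]; omega
        · rw [Finset.mem_Ioo]; omega
      · exact Finset.mem_filter.mpr ⟨Finset.mem_univ _, hper⟩
  have cardBad : ∀ i p', i + ℓ ≤ L → 1 ≤ p' → p' < ℓ →
      (Bad i p').card ≤ q ^ (L - ℓ + p') := by
    intro i p' hiL h1 h2
    have : (Bad i p').card ≤ Fintype.card (Fin (L - ℓ + p') → Sigma) := by
      rw [← Finset.card_univ]
      apply Finset.card_le_card_of_injOn
        (fun x => fun j : Fin (L - ℓ + p') =>
          if h : (j : ℕ) < i + p' then x ⟨j, by omega⟩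
          else x ⟨(j : ℕ) + (ℓ - p'), by omega⟩)
        (fun _ _ => Finset.mem_univ _)
      intro x hx y hy heq
      have hx' : PerAt ℓ L x i p' := (Finset.mem_filter.mp hx).2
      have hy' : PerAt ℓ L y i p' := (Finset.mem_filter.mp hy).2
      have main : ∀ a, ∀ h : a < L, x ⟨a, h⟩ = y ⟨a, h⟩ := by
        intro a
        induction a using Nat.strong_induction_on with
        | _ a IH =>
          intro h
          rcases lt_or_ge a (i + p') with hc | hc
          · have h5 := congrFun heq ⟨a, by omega⟩
            dsimp only at h5
            simp only [dif_pos hc] at h5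
            exact h5
          · rcases lt_or_ge a (i + ℓ) with hc2 | hc2
            · have e1 := hx' (a - p') (by omega) (by omega)
              have e2 := hy' (a - p') (by omega) (by omega)
              rw [show a - p' + p' = a from by omega] at e1 e2
              unfold getS at e1 e2
              rw [dif_pos (show a - p' < L from by omega), dif_pos h] at e1 e2
              rw [← e1, ← e2]
              exact IH (a - p') (by omega) _
            · have h5 := congrFun heq ⟨a - (ℓ - p'), by omega⟩
              dsimp only at h5
              simp only [dif_neg (show ¬(a - (ℓ - p') < i + p') from by omega)] at h5
              have e3 : a - (ℓ - p') + (ℓ - p') = a := by omega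
              simpa only [e3] using h5
      funext a
      exact main a.val a.isLt
    calc (Bad i p').card ≤ Fintype.card (Fin (L - ℓ + p') → Sigma) := this
      _ = q ^ (L - ℓ + p') := by
          rw [Fintype.card_fun, hcard, Fintype.card_fin]
  -- union bound
  have hcount : (q : ℕ) ^ L ≤
      ((Finset.univ : Finset (Fin L → Sigma)).filter (fun x => GoodP ℓ p L x)).card +
      (L - ℓ + 1) * ∑ p' ∈ Finset.Ioo 0 p, q ^ (L - ℓ + p') := by
    have h0 : (Finset.univ : Finset (Fin L → Sigma)).card = q ^ L := by
      rw [Finset.card_univ, Fintype.card_fun, hcard, Fintype.card_fin]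
    calc (q : ℕ) ^ L = (Finset.univ : Finset (Fin L → Sigma)).card := h0.symm
      _ ≤ (((Finset.univ : Finset (Fin L → Sigma)).filter (fun x => GoodP ℓ p L x)) ∪
            ((Finset.range (L - ℓ + 1) ×ˢ Finset.Ioo 0 p).biUnion
              (fun ip => Bad ip.1 ip.2))).card := Finset.card_le_card cover
      _ ≤ ((Finset.univ : Finset (Fin L → Sigma)).filter (fun x => GoodP ℓ p L x)).card +
            ((Finset.range (L - ℓ + 1) ×ˢ Finset.Ioo 0 p).biUnion
              (fun ip => Bad ip.1 ip.2)).card := Finset.card_union_le _ _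
      _ ≤ ((Finset.univ : Finset (Fin L → Sigma)).filter (fun x => GoodP ℓ p L x)).card +
            ∑ ip ∈ Finset.range (L - ℓ + 1) ×ˢ Finset.Ioo 0 p, (Bad ip.1 ip.2).card := by
            gcongr
            exact Finset.card_biUnion_le
      _ ≤ ((Finset.univ : Finset (Fin L → Sigma)).filter (fun x => GoodP ℓ p L x)).card +
            (L - ℓ + 1) * ∑ p' ∈ Finset.Ioo 0 p, q ^ (L - ℓ + p') := by
            gcongr
            rw [Finset.sum_product]
            have : ∀ i ∈ Finset.range (L - ℓ + 1),
                ∑ p' ∈ Finset.Ioo 0 p, (Bad i p').card ≤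
                ∑ p' ∈ Finset.Ioo 0 p, q ^ (L - ℓ + p') := by
              intro i hi
              apply Finset.sum_le_sum
              intro p' hp'
              rw [Finset.mem_Ioo] at hp'
              rw [Finset.mem_range] at hi
              exact cardBad i p' (by omega) (by omega) (by omega)
            calc ∑ i ∈ Finset.range (L - ℓ + 1), ∑ p' ∈ Finset.Ioo 0 p, (Bad i p').card
                ≤ ∑ i ∈ Finset.range (L - ℓ + 1),
                    ∑ p' ∈ Finset.Ioo 0 p, q ^ (L - ℓ + p') :=
                  Finset.sum_le_sum this
              _ = (L - ℓ + 1) * ∑ p' ∈ Finset.Ioo 0 p, q ^ (L - ℓ + p') := by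
                  rw [Finset.sum_const, Finset.card_range, smul_eq_mul]
  -- arithmetic: (L-ℓ+1) * Σ q^{L-ℓ+p'} ≤ q^b
  have harith : (L - ℓ + 1) * ∑ p' ∈ Finset.Ioo 0 p, q ^ (L - ℓ + p') ≤ q ^ b := by
    have hS : ∀ p' : ℕ, q ^ (L - ℓ + p') = q ^ (L - ℓ) * q ^ p' := fun p' => pow_add q _ _
    have hsum : ∑ p' ∈ Finset.Ioo 0 p, q ^ (L - ℓ + p') =
        q ^ (L - ℓ) * ∑ p' ∈ Finset.Ioo 0 p, q ^ p' := by
      rw [Finset.mul_sum]; exact Finset.sum_congr rfl (fun p' _ => hS p')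
    rw [hsum]
    set X := (L - ℓ + 1) * (q ^ (L - ℓ) * ∑ p' ∈ Finset.Ioo 0 p, q ^ p') with hX
    have hgeo := geo_sum q (by omega) p (by omega)
    have hmul : (q - 1) * X ≤ q ^ b := by
      have e1 : (q - 1) * X =
          (L - ℓ + 1) * (q ^ (L - ℓ) * ((q - 1) * ∑ p' ∈ Finset.Ioo 0 p, q ^ p')) := by
        rw [hX]; ring
      rw [e1]
      have e2 : (q - 1) * ∑ p' ∈ Finset.Ioo 0 p, q ^ p' ≤ q ^ p := by omega
      calc (L - ℓ + 1) * (q ^ (L - ℓ) * ((q - 1) * ∑ p' ∈ Finset.Ioo 0 p, q ^ p'))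
          ≤ (q ^ (ℓ - p - 1)) * (q ^ (L - ℓ) * q ^ p) := by
            have : L - ℓ + 1 = b + 2 - ℓ := by omega
            rw [this]
            exact Nat.mul_le_mul hA (Nat.mul_le_mul_left _ e2)
        _ = q ^ ((ℓ - p - 1) + ((L - ℓ) + p)) := by rw [pow_add, pow_add]
        _ = q ^ b := by congr 1; omega
    calc X ≤ (q - 1) * X := Nat.le_mul_of_pos_left X (by omega)
      _ ≤ q ^ b := hmul
  have hpow : q ^ L = q * q ^ b := by rw [hL, pow_succ]; ring
  have h2qb : 2 * q ^ b ≤ q ^ L := by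
    rw [hpow]; exact Nat.mul_le_mul_right _ hq2
  have final : q ^ b ≤ ((Finset.univ : Finset (Fin L → Sigma)).filter (fun x => GoodP ℓ p L x)).card := by omega
  rw [Nat.card_eq_fintype_card, Fintype.card_subtype]
  exact final
end Count

/-- Construction 5 -/
theorem lpa_3k_redundancy_construction
    {q : ℕ} (hq : 2 ≤ q) (Sigma : Type*) [Fintype Sigma]
    (hcard : Fintype.card Sigma = q)
    (n ℓ p k : ℕ) (hp : 2 ≤ p) (hl4p : 4 * p - 7 ≤ ℓ) (hk : 1 ≤ k) (hkn : k ∣ n)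
    (hlnk : ℓ ≤ n / k)
    (hℓ : ℓ ≥ ⌈Real.logb q (((n / k : ℕ) : ℝ) - (ℓ : ℝ) + 2)⌉₊ + p + 1) :
    Nat.card {s : Fin (n + 3 * k - 2) → Sigma // LPAvoiding ℓ p s} ≥ q ^ n := by
  classical
  haveI hNE : Nonempty Sigma := by
    rw [← Fintype.card_pos_iff]; omega
  have hq2' : 2 ≤ Fintype.card Sigma := by rw [hcard]; exact hq
  set b := n / k with hbdef
  have hn : k * b = n := Nat.mul_div_cancel' hkn
  have hbl : ℓ ≤ b := hlnk
  -- logarithm manipulation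
  have hq1R : (1:ℝ) < (q:ℝ) := by exact_mod_cast hq.trans_lt' one_lt_two
  have hblR : (ℓ:ℝ) ≤ (b:ℝ) := by exact_mod_cast hbl
  have hxpos : (1:ℝ) < (b:ℝ) - ℓ + 2 := by linarith
  have hlog1 : 1 ≤ ⌈Real.logb q ((b:ℝ) - ℓ + 2)⌉₊ := by
    have h0 : 0 < Real.logb q ((b:ℝ) - ℓ + 2) := Real.logb_pos hq1R hxpos
    exact Nat.ceil_pos.mpr h0
  have hlp2 : p + 2 ≤ ℓ := by omega
  have hceil : ⌈Real.logb q ((b:ℝ) - ℓ + 2)⌉₊ ≤ ℓ - p - 1 := by omega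
  have hA : b + 2 - ℓ ≤ q ^ (ℓ - p - 1) := by
    have h1 : Real.logb q ((b:ℝ) - ℓ + 2) ≤ ((ℓ - p - 1 : ℕ) : ℝ) := by
      calc Real.logb q ((b:ℝ) - ℓ + 2) ≤ (⌈Real.logb q ((b:ℝ) - ℓ + 2)⌉₊ : ℝ) :=
            Nat.le_ceil _
        _ ≤ ((ℓ - p - 1 : ℕ) : ℝ) := by exact_mod_cast hceil
    have h2 : ((b:ℝ) - ℓ + 2) ≤ (q:ℝ) ^ ((ℓ - p - 1 : ℕ)) := by
      have h3 := (Real.logb_le_iff_le_rpow hq1R (by linarith)).mp h1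
      rwa [Real.rpow_natCast] at h3
    have h4 : ((b + 2 - ℓ : ℕ) : ℝ) ≤ ((q ^ (ℓ - p - 1) : ℕ) : ℝ) := by
      push_cast
      have e : ((b + 2 - ℓ : ℕ) : ℝ) = (b:ℝ) - ℓ + 2 := by
        have : ℓ ≤ b + 2 := by omega
        push_cast [this]
        ring
      rw [e]; push_cast; exact h2
    exact_mod_cast h4
  -- sigma
  set σ := max (p-1) (2*p-4) with hσdef
  have hσ1 : 1 ≤ σ := by omega
  have hℓσ : 2 * σ + 1 ≤ ℓ := by omega
  have hple : ∀ p', 1 ≤ p' → p' < p → p' ≤ σ := by intro p' h1 h2; omega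
  have hsum : ∀ p1 p2, 1 ≤ p1 → p1 < p → 1 ≤ p2 → p2 < p → p1 ≠ p2 →
      p1 + p2 - Nat.gcd p1 p2 ≤ σ := by
    intro p1 p2 h1 h2 h3 h4 hne
    have hg : 1 ≤ Nat.gcd p1 p2 := Nat.gcd_pos_of_pos_left _ (by omega)
    omega
  -- junction choice function
  have hjun : ∀ S T : ℕ → Sigma, ∃ uv : Sigma × Sigma,
      ∀ i p', i ≤ ℓ → 1 ≤ p' → p' < p →
      ∃ jj, jj + p' < ℓ ∧ Jfun ℓ S T uv.1 uv.2 (i + jj) ≠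
        Jfun ℓ S T uv.1 uv.2 (i + jj + p') := by
    intro S T
    obtain ⟨u, v, h⟩ := junction (σ := σ) hq2' hσ1 hℓσ hple hsum S T
    exact ⟨(u, v), h⟩
  choose buf hbuf using hjun
  -- the assembled string
  set m := n + 3 * k - 2 with hmdef
  have hkb3 : k * (b+3) = k * b + k * 3 := Nat.mul_add k b 3
  have hmval : m + 2 = k * (b + 3) := by omega
  set xg : (Fin k → Fin (b+1) → Sigma) → ℕ → ℕ → Sigma :=
    fun x j t => if h : j < k then getS (b+1) (x ⟨j, h⟩) t
      else Classical.arbitrary Sigma with hxg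
  set SJ : (Fin k → Fin (b+1) → Sigma) → ℕ → ℕ → Sigma :=
    fun x j t => xg x j (b + 2 - ℓ + t) with hSJ
  set bigF : (Fin k → Fin (b+1) → Sigma) → ℕ → Sigma := fun x pos =>
    let j := pos / (b+3); let t := pos % (b+3)
    if t ≤ b then xg x j t
    else if t = b+1 then (buf (SJ x j) (xg x (j+1))).1
    else (buf (SJ x j) (xg x (j+1))).2 with hbigF
  -- value lemmas
  have hb3pos : 0 < b + 3 := by omega
  have bigF_val : ∀ x j a, a < b + 3 →
      bigF x ((b+3) * j + a) =
        (if a ≤ b then xg x j a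
         else if a = b+1 then (buf (SJ x j) (xg x (j+1))).1
         else (buf (SJ x j) (xg x (j+1))).2) := by
    intro x j a ha
    have hdiv : ((b+3) * j + a) / (b+3) = j := by
      rw [Nat.mul_add_div hb3pos, Nat.div_eq_of_lt ha, Nat.add_zero]
    have hmod : ((b+3) * j + a) % (b+3) = a := by
      rw [Nat.mul_add_mod, Nat.mod_eq_of_lt ha]
    rw [hbigF]
    simp only [hdiv, hmod]
  -- the assembled string avoids all short periods
  have hLPA : ∀ x : Fin k → Fin (b+1) → Sigma,
      (∀ j : Fin k, GoodP ℓ p (b+1) (x j)) →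
      ∀ i p', i + ℓ ≤ m → 1 ≤ p' → p' < p →
      ¬ (∀ jj, jj + p' < ℓ → bigF x (i + jj) = bigF x (i + jj + p')) := by
    intro x hx i p' hiℓ h1 h2 hper
    set j := i / (b+3) with hj
    set t := i % (b+3) with ht
    have hit : (b+3) * j + t = i := Nat.div_add_mod i (b+3)
    have htlt : t < b + 3 := Nat.mod_lt _ hb3pos
    have hjk : j < k := by
      rw [hj]
      exact (Nat.div_lt_iff_lt_mul hb3pos).mpr (by omega)
    rcases le_or_gt (t + ℓ) (b+1) with hcase | hcase
    · -- internal window in block j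
      apply hx ⟨j, hjk⟩ t p' (by omega) h1 h2
      intro a ha1 ha2
      have hva : bigF x ((b+3)*j + a) = getS (b+1) (x ⟨j, hjk⟩) a := by
        rw [bigF_val x j a (by omega), if_pos (show a ≤ b by omega), hxg]
        simp only [dif_pos hjk]
      have hva2 : bigF x ((b+3)*j + (a+p')) = getS (b+1) (x ⟨j, hjk⟩) (a+p') := by
        rw [bigF_val x j (a+p') (by omega), if_pos (show a+p' ≤ b by omega), hxg]
        simp only [dif_pos hjk]
      have hs := hper (a - t) (by omega)
      rw [show i + (a - t) = (b+3)*j + a from by omega,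
          show (b+3)*j + a + p' = (b+3)*j + (a+p') from by omega] at hs
      rw [hva, hva2] at hs
      exact hs
    · -- junction window
      have hj1k : j + 1 < k := by
        by_contra hcon
        have hjk1 : k - 1 ≤ j := by omega
        have h5 : (b+3) * (k-1) ≤ (b+3) * j := Nat.mul_le_mul_left _ hjk1
        have e3 : (b+3)*(k-1) + (b+3) = (b+3)*k := by
          rw [← Nat.mul_succ]; congr 1; omega
        have e4 : (b+3)*k = k*(b+3) := Nat.mul_comm _ _
        omega
      set base := (b+3)*j + (b+2-ℓ) with hbase
      have agree : ∀ w, w < 2*ℓ →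
          bigF x (base + w) = Jfun ℓ (SJ x j) (xg x (j+1)) (buf (SJ x j) (xg x (j+1))).1 (buf (SJ x j) (xg x (j+1))).2 w := by
        intro w hw
        rcases lt_trichotomy w (ℓ-1) with hw1 | hw1 | hw1
        · have e7 : base + w = (b+3)*j + (b+2-ℓ+w) := by omega
          rw [e7, bigF_val x j _ (by omega), if_pos (show b+2-ℓ+w ≤ b by omega)]
          simp only [Jfun]
          rw [if_pos hw1]
        · have e7 : base + w = (b+3)*j + (b+1) := by omega
          rw [e7, bigF_val x j _ (by omega), if_neg (show ¬ (b+1 ≤ b) by omega),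
            if_pos rfl]
          simp only [Jfun]
          rw [if_neg (by omega), if_pos hw1]
        · have hw2 : w = ℓ ∨ ℓ < w := by omega
          rcases hw2 with hw2 | hw2
          · have e7 : base + w = (b+3)*j + (b+2) := by omega
            rw [e7, bigF_val x j _ (by omega), if_neg (show ¬ (b+2 ≤ b) by omega),
              if_neg (show ¬ (b+2 = b+1) by omega)]
            simp only [Jfun]
            rw [if_neg (by omega), if_neg (by omega), if_pos hw2]
          · have e7 : base + w = (b+3)*(j+1) + (w - ℓ - 1) := by
              rw [Nat.mul_succ]; omega
            rw [e7, bigF_val x (j+1) _ (by omega),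
              if_pos (show w - ℓ - 1 ≤ b by omega)]
            simp only [Jfun]
            rw [if_neg (by omega), if_neg (by omega), if_neg (by omega)]
            congr 1 <;> omega
      obtain ⟨jj, hjj, hne⟩ := hbuf (SJ x j) (xg x (j+1)) (i - base) p' (by omega) h1 h2
      apply hne
      have e5 : i + jj = base + ((i - base) + jj) := by omega
      have e6 : i + jj + p' = base + ((i - base) + jj + p') := by omega
      have h7 := hper jj hjj
      rw [e6, e5] at h7
      rw [agree _ (by omega), agree _ (by omega)] at h7
      exact h7
  -- encode good tuples
  have hDfin : Fintype {y : Fin (b+1) → Sigma // GoodP ℓ p (b+1) y} :=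
    Subtype.fintype _
  set Φ : (Fin k → {y : Fin (b+1) → Sigma // GoodP ℓ p (b+1) y}) →
      {s : Fin m → Sigma // LPAvoiding ℓ p s} := fun x =>
    ⟨fun pos => bigF (fun j => (x j).val) pos.val, by
      intro i hw p' h1 h2 hper
      apply hLPA (fun j => (x j).val) (fun j => (x j).2) i p' hw h1 h2
      intro jj hjj
      have h8 : bigF (fun j => (x j).val) (i + jj) =
          bigF (fun j => (x j).val) (i + (jj + p')) := hper jj hjj
      have e9 : i + (jj + p') = i + jj + p' := by omega
      rwa [e9] at h8⟩ with hΦ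
  have hinj : Function.Injective Φ := by
    intro x y hxy
    funext j
    apply Subtype.ext
    funext a
    have hposlt : (b+3)*(j:ℕ) + (a:ℕ) < m := by
      have h5 : (b+3)*(j:ℕ) ≤ (b+3)*(k-1) := Nat.mul_le_mul_left _ (by omega)
      have e3 : (b+3)*(k-1) + (b+3) = (b+3)*k := by
        rw [← Nat.mul_succ]; congr 1; omega
      have e4 : (b+3)*k = k*(b+3) := Nat.mul_comm _ _
      have := a.isLt
      omega
    have h11 : bigF (fun j' => (x j').val) ((b+3)*(j:ℕ) + (a:ℕ)) =
        bigF (fun j' => (y j').val) ((b+3)*(j:ℕ) + (a:ℕ)) := by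
      have h10 := congrArg Subtype.val hxy
      exact congrFun h10 ⟨(b+3)*(j:ℕ) + (a:ℕ), hposlt⟩
    have hval : ∀ z : Fin k → {y : Fin (b+1) → Sigma // GoodP ℓ p (b+1) y},
        bigF (fun j' => (z j').val) ((b+3)*(j:ℕ) + (a:ℕ)) = (z j).val a := by
      intro z
      have haa : (a:ℕ) < b + 1 := a.isLt
      have e := bigF_val (fun j' => (z j').val) (j:ℕ) (a:ℕ) (by omega)
      rw [e, if_pos (show (a:ℕ) ≤ b by omega), hxg]
      simp only [dif_pos j.isLt]
      rw [getS, dif_pos haa]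
    rw [hval x, hval y] at h11
    exact h11
  have hblocks : q ^ b ≤ Nat.card {y : Fin (b+1) → Sigma // GoodP ℓ p (b+1) y} :=
    block_count q b hq hcard hp hlp2 hbl hA
  calc (q:ℕ) ^ n = (q ^ b) ^ k := by
        rw [← pow_mul, Nat.mul_comm b k, hn]
    _ ≤ (Nat.card {y : Fin (b+1) → Sigma // GoodP ℓ p (b+1) y}) ^ k :=
        Nat.pow_le_pow_left hblocks k
    _ = Fintype.card (Fin k → {y : Fin (b+1) → Sigma // GoodP ℓ p (b+1) y}) := by
        rw [Fintype.card_fun, Fintype.card_fin, Nat.card_eq_fintype_card]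
    _ ≤ Fintype.card {s : Fin m → Sigma // LPAvoiding ℓ p s} :=
        Fintype.card_le_of_injective Φ hinj
    _ = Nat.card {s : Fin m → Sigma // LPAvoiding ℓ p s} :=
        (Nat.card_eq_fintype_card).symm
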